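/- Suppose JA and JB are affine maps. Then for all γ ∈ (0,1) and λ ∈ (0,1], the commutator of the two Aragón Artacho–Campoy operators satisfies T(Aγ,Bγ)∘T(Bγ,Aγ) − T(Bγ,Aγ)∘T(Aγ,Bγ) = λ²·(RBγ∘RAγ∘RAγ∘RBγ − RAγ∘RBγ∘RBγ∘RAγ), i.e. for every x ∈ X, T(Aγ,Bγ)(T(Bγ,Aγ)(x)) − T(Bγ,Aγ)(T(Aγ,Bγ)(x)) = λ²·(RBγ(RAγ(RAγ(RBγ(x)))) − RAγ(RBγ(RBγ(RAγ(x))))). -/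
import Mathlib


theorem aacaStmt12 {X : Type*} [NormedAddCommGroup X] [InnerProductSpace ℝ X] [CompleteSpace X]
    (JA JB : X → X)
    (hJA : ∀ (x y : X) (t : ℝ), JA (t • x + (1 - t) • y) = t • JA x + (1 - t) • JA y)
    (hJB : ∀ (x y : X) (t : ℝ), JB (t • x + (1 - t) • y) = t • JB x + (1 - t) • JB y)
    (w : X) (γ lam : ℝ)
    (hγ : γ ∈ Set.Ioo (0 : ℝ) 1) (hlam : lam ∈ Set.Ioc (0 : ℝ) 1)
    (RAγ RBγ TAγBγ TBγAγ : X → X)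
    (hRAγ : ∀ x, RAγ x = (2 * γ) • JA x + (2 * (1 - γ)) • w - x)
    (hRBγ : ∀ x, RBγ x = (2 * γ) • JB x + (2 * (1 - γ)) • w - x)
    (hTAB : ∀ x, TAγBγ x = (1 - lam) • x + lam • RBγ (RAγ x))
    (hTBA : ∀ x, TBγAγ x = (1 - lam) • x + lam • RAγ (RBγ x)) :
    ∀ x : X, TAγBγ (TBγAγ x) - TBγAγ (TAγBγ x)
      = (lam ^ 2) • (RBγ (RAγ (RAγ (RBγ x))) - RAγ (RBγ (RBγ (RAγ x)))) := by
  have hRA : ∀ (x y : X), RAγ ((1 - lam) • x + lam • y)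
      = (1 - lam) • RAγ x + lam • RAγ y := by
    intro x y
    have h := hJA x y (1 - lam)
    rw [sub_sub_cancel] at h
    rw [hRAγ, h, hRAγ, hRAγ]
    module
  have hRB : ∀ (x y : X), RBγ ((1 - lam) • x + lam • y)
      = (1 - lam) • RBγ x + lam • RBγ y := by
    intro x y
    have h := hJB x y (1 - lam)
    rw [sub_sub_cancel] at h
    rw [hRBγ, h, hRBγ, hRBγ]
    module
  intro x
  rw [hTAB (TBγAγ x), hTBA (TAγBγ x), hTBA x, hTAB x, hRA, hRB, hRB, hRA]
  module
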